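/- arXiv:2003.09343 — 4 statements merged into one kernel-verified Lean document; each statement's English description precedes it below -/
import Mathlib

section
/- Let θ₁, θ₂ ∈ (0, π) with θ₁ + θ₂ < π. If h, k are nonzero complex numbers with |arg(h)| ≤ θ₁ and |arg(k)| ≤ θ₂, then |k| ≤ (1/sin(θ₁+θ₂)) · |h + k|. -/
theorem stmt2 (θ₁ θ₂ : ℝ) (h1 : θ₁ ∈ Set.Ioo 0 Real.pi) (h2 : θ₂ ∈ Set.Ioo 0 Real.pi)
    (hsum : θ₁ + θ₂ < Real.pi) (h k : ℂ) (hh : h ≠ 0) (hk : k ≠ 0)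
    (hargh : |h.arg| ≤ θ₁) (hargk : |k.arg| ≤ θ₂) :
    ‖k‖ ≤ (1 / Real.sin (θ₁ + θ₂)) * ‖h + k‖ := by
  set s := θ₁ + θ₂ with hs
  have hs0 : 0 < s := by have := h1.1; have := h2.1; positivity
  have hsin : 0 < Real.sin s := Real.sin_pos_of_pos_of_lt_pi hs0 hsum
  set a := h.arg
  set b := k.arg
  have hr : (0:ℝ) < ‖h‖ := by simpa [norm_pos_iff] using hh
  have ht : (0:ℝ) < ‖k‖ := by simpa [norm_pos_iff] using hk
  have hre : h.re = ‖h‖ * Real.cos a := (Complex.norm_mul_cos_arg h).symm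
  have him : h.im = ‖h‖ * Real.sin a := (Complex.norm_mul_sin_arg h).symm
  have kre : k.re = ‖k‖ * Real.cos b := (Complex.norm_mul_cos_arg k).symm
  have kim : k.im = ‖k‖ * Real.sin b := (Complex.norm_mul_sin_arg k).symm
  have habd : |a - b| ≤ s := by
    have := abs_le.1 hargh; have := abs_le.1 hargk
    rw [abs_le]; constructor <;> [linarith; linarith]
  have hcos : Real.cos s ≤ Real.cos (a - b) := by
    rw [← Real.cos_abs (a - b)]
    exact Real.cos_le_cos_of_nonneg_of_le_pi (abs_nonneg _) hsum.le habd
  have hsq : (Real.sin s * ‖k‖) ^ 2 ≤ ‖h + k‖ ^ 2 := by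
    have hnorm : ‖h + k‖ ^ 2 =
        ‖h‖ ^ 2 + ‖k‖ ^ 2 + 2 * (h.re * k.re + h.im * k.im) := by
      rw [Complex.sq_norm, Complex.sq_norm, Complex.sq_norm]
      simp [Complex.normSq_apply]; ring
    have hcsub : Real.cos a * Real.cos b + Real.sin a * Real.sin b = Real.cos (a - b) :=
      (Real.cos_sub a b).symm
    have hpyth : Real.sin s ^ 2 + Real.cos s ^ 2 = 1 := Real.sin_sq_add_cos_sq s
    rw [hre, him, kre, kim] at hnorm
    have hnorm2 : ‖h + k‖ ^ 2 = ‖h‖ ^ 2 + ‖k‖ ^ 2 +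
        2 * ‖h‖ * ‖k‖ * Real.cos (a - b) := by
      rw [hnorm, ← hcsub]; ring
    nlinarith [sq_nonneg (‖h‖ + Real.cos s * ‖k‖), mul_pos hr ht]
  have key : Real.sin s * ‖k‖ ≤ ‖h + k‖ := by
    have h1' : 0 ≤ Real.sin s * ‖k‖ := by positivity
    exact (pow_le_pow_iff_left₀ h1' (norm_nonneg _) two_ne_zero).1 hsq
  calc ‖k‖ = (1 / Real.sin s) * (Real.sin s * ‖k‖) := by
        field_simp
    _ ≤ (1 / Real.sin s) * ‖h + k‖ := by
        apply mul_le_mul_of_nonneg_left key; positivity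
end

section
/- Let θ₁, θ₂ ∈ (0, π) with θ₁ + θ₂ < π. If h, k are complex numbers with |arg(h)| ≤ θ₁ whenever h ≠ 0 and |arg(k)| ≤ θ₂ whenever k ≠ 0, then max(|h|, |k|) ≤ (1/sin(θ₁+θ₂)) · |h + k|. -/
lemma key_ineq (θ : ℝ) (hθ2 : θ ≤ Real.pi) (h k : ℂ) (hh : h ≠ 0) (hk : k ≠ 0)
    (harg : |h.arg - k.arg| ≤ θ) :
    Real.sin θ * ‖h‖ ≤ ‖h + k‖ := by
  have h1 : ‖h‖ ≠ 0 := by simpa using hh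
  have h2 : ‖k‖ ≠ 0 := by simpa using hk
  have hre : (h * (starRingEnd ℂ) k).re
      = ‖h‖ * ‖k‖ * Real.cos (h.arg - k.arg) := by
    rw [Real.cos_sub, Complex.cos_arg hh, Complex.sin_arg, Complex.cos_arg hk, Complex.sin_arg]
    field_simp
    rw [Complex.mul_re, Complex.conj_re, Complex.conj_im]; ring
  have hcos : Real.cos θ ≤ Real.cos (h.arg - k.arg) := by
    rw [← Real.cos_abs (h.arg - k.arg)]
    exact Real.cos_le_cos_of_nonneg_of_le_pi (abs_nonneg _) hθ2 harg
  have hsq : (Real.sin θ * ‖h‖) ^ 2 ≤ (‖h + k‖) ^ 2 := by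
    rw [Complex.sq_norm, Complex.normSq_add, hre, ← Complex.sq_norm h, ← Complex.sq_norm k]
    have hpyth : Real.sin θ ^ 2 = 1 - Real.cos θ ^ 2 := by
      have := Real.sin_sq_add_cos_sq θ; linarith
    nlinarith [sq_nonneg (Real.cos θ * ‖h‖ + ‖k‖),
      mul_nonneg (norm_nonneg h) (norm_nonneg k),
      norm_nonneg h, norm_nonneg k]
  nlinarith [norm_nonneg (h + k), norm_nonneg h,
    Real.sin_nonneg_of_nonneg_of_le_pi (le_trans (abs_nonneg _) harg) hθ2]

theorem stmt3 (θ₁ θ₂ : ℝ) (h1 : θ₁ ∈ Set.Ioo 0 Real.pi) (h2 : θ₂ ∈ Set.Ioo 0 Real.pi)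
    (hsum : θ₁ + θ₂ < Real.pi) (h k : ℂ)
    (hargh : h ≠ 0 → |h.arg| ≤ θ₁) (hargk : k ≠ 0 → |k.arg| ≤ θ₂) :
    max ‖h‖ ‖k‖ ≤ (1 / Real.sin (θ₁ + θ₂)) * ‖h + k‖ := by
  have hspos : 0 < Real.sin (θ₁ + θ₂) :=
    Real.sin_pos_of_pos_of_lt_pi (by linarith [h1.1, h2.1]) hsum
  have hs1 : Real.sin (θ₁ + θ₂) ≤ 1 := Real.sin_le_one _
  rcases eq_or_ne h 0 with rfl | hh
  · simp only [map_zero, norm_zero, zero_add, max_le_iff]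
    constructor
    · positivity
    · rw [div_mul_eq_mul_div, le_div_iff₀ hspos]
      nlinarith [norm_nonneg k]
  rcases eq_or_ne k 0 with rfl | hk
  · simp only [map_zero, norm_zero, add_zero, max_le_iff]
    constructor
    · rw [div_mul_eq_mul_div, le_div_iff₀ hspos]
      nlinarith [norm_nonneg h]
    · positivity
  have harg : |h.arg - k.arg| ≤ θ₁ + θ₂ := by
    calc |h.arg - k.arg| ≤ |h.arg| + |k.arg| := abs_sub _ _
    _ ≤ θ₁ + θ₂ := add_le_add (hargh hh) (hargk hk)
  have k1 := key_ineq (θ₁ + θ₂) hsum.le h k hh hk harg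
  have k2 := key_ineq (θ₁ + θ₂) hsum.le k h hk hh (by rw [abs_sub_comm]; exact harg)
  rw [add_comm k h] at k2
  rw [max_le_iff]
  constructor <;> rw [div_mul_eq_mul_div, le_div_iff₀ hspos] <;> linarith
end

section
/- For all r₁, r₂ > 0, one has 1/(r₁ + r₂) = ∫_0^∞ e^{-r₁ r} e^{-r₂ r} dr, and consequently ∫_0^∞ ∫_0^∞ (r₁^{4/3} r₂^{4/3} e^{-(r₁ + λ r₂)})/(r₁+r₂) dr₁ dr₂ = Γ(7/3)² ∫_0^∞ (1+r)^{-7/3}(λ+r)^{-7/3} dr for every λ > 0. -/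
open MeasureTheory Set ENNReal

private lemma hexp_intg {b : ℝ} (hb : 0 < b) :
    IntegrableOn (fun r : ℝ => Real.exp (-(b * r))) (Ioi 0) := by
  simpa [neg_mul] using exp_neg_integrableOn_Ioi 0 hb

private lemma hexp_int {b : ℝ} (hb : 0 < b) :
    ∫ r in Ioi (0:ℝ), Real.exp (-(b * r)) = 1 / b := by
  have h := Real.integral_rpow_mul_exp_neg_mul_Ioi (a := 1) one_pos hb
  simpa using h

private lemma hexp_lint {b : ℝ} (hb : 0 < b) :
    ∫⁻ r in Ioi (0:ℝ), ENNReal.ofReal (Real.exp (-(b * r))) = ENNReal.ofReal (1 / b) := by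
  rw [← ofReal_integral_eq_lintegral_ofReal (hexp_intg hb)
      (Filter.Eventually.of_forall fun r => (Real.exp_pos _).le), hexp_int hb]

private lemma hgam_int {b : ℝ} (hb : 0 < b) :
    ∫ t in Ioi (0:ℝ), t ^ ((4:ℝ)/3) * Real.exp (-(b * t))
      = Real.Gamma (7/3) * b ^ (-(7:ℝ)/3) := by
  have h := Real.integral_rpow_mul_exp_neg_mul_Ioi (a := 7/3) (by norm_num) hb
  rw [show (7:ℝ)/3 - 1 = 4/3 by norm_num] at h
  rw [h, one_div, Real.inv_rpow hb.le, neg_div, Real.rpow_neg hb.le, mul_comm]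

private lemma hgam_intg {b : ℝ} (hb : 0 < b) :
    IntegrableOn (fun t : ℝ => t ^ ((4:ℝ)/3) * Real.exp (-(b * t))) (Ioi 0) := by
  have h := integrableOn_rpow_mul_exp_neg_mul_rpow (s := (4:ℝ)/3) (p := 1) (by norm_num)
    one_pos hb
  simpa [Real.rpow_one, neg_mul] using h

private lemma hgam_lint {b : ℝ} (hb : 0 < b) :
    ∫⁻ t in Ioi (0:ℝ), ENNReal.ofReal (t ^ ((4:ℝ)/3) * Real.exp (-(b * t)))
      = ENNReal.ofReal (Real.Gamma (7/3) * b ^ (-(7:ℝ)/3)) := by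
  rw [← ofReal_integral_eq_lintegral_ofReal (hgam_intg hb) ?_, hgam_int hb]
  filter_upwards [ae_restrict_mem measurableSet_Ioi] with t ht
  have ht' : (0:ℝ) < t := ht
  positivity

theorem stmt9 :
    (∀ r₁ r₂ : ℝ, 0 < r₁ → 0 < r₂ →
      1/(r₁+r₂) = ∫ r in Set.Ioi (0:ℝ), Real.exp (-r₁*r) * Real.exp (-r₂*r)) ∧
    (∀ l : ℝ, 0 < l →
      (∫ r₁ in Set.Ioi (0:ℝ), ∫ r₂ in Set.Ioi (0:ℝ),
          r₁ ^ ((4:ℝ)/3) * r₂ ^ ((4:ℝ)/3) * Real.exp (-(r₁ + l*r₂)) / (r₁+r₂))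
        = Real.Gamma (7/3)^2
          * ∫ r in Set.Ioi (0:ℝ), (1+r) ^ (-(7:ℝ)/3) * (l+r) ^ (-(7:ℝ)/3)) := by
  constructor
  · intro r₁ r₂ h₁ h₂
    rw [← hexp_int (show (0:ℝ) < r₁ + r₂ by linarith)]
    refine setIntegral_congr_fun measurableSet_Ioi fun r _ => ?_
    rw [← Real.exp_add]
    ring_nf
  · intro l hl
    set G : ℝ := Real.Gamma (7/3) with hG
    set f : ℝ → ℝ → ℝ := fun r₁ r₂ =>
      r₁ ^ ((4:ℝ)/3) * r₂ ^ ((4:ℝ)/3) * Real.exp (-(r₁ + l*r₂)) / (r₁+r₂) with hf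
    have hGpos : 0 < G := Real.Gamma_pos_of_pos (by norm_num)
    -- measurability facts
    have mf : Measurable fun p : ℝ × ℝ => ENNReal.ofReal (f p.1 p.2) := by
      apply Measurable.ennreal_ofReal
      fun_prop
    have mg : Measurable fun p : ℝ × ℝ =>
        ENNReal.ofReal ((p.2 ^ ((4:ℝ)/3) * Real.exp (-((1+p.1)*p.2))) *
          (G * (l+p.1) ^ (-(7:ℝ)/3))) := by
      apply Measurable.ennreal_ofReal
      fun_prop
    -- Step: inner lintegral over r₂ equals lintegral over r.
    have key : ∀ r₁ ∈ Ioi (0:ℝ),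
        (∫⁻ r₂ in Ioi (0:ℝ), ENNReal.ofReal (f r₁ r₂))
          = ∫⁻ r in Ioi (0:ℝ),
              ENNReal.ofReal ((r₁ ^ ((4:ℝ)/3) * Real.exp (-((1+r)*r₁))) *
                (G * (l+r) ^ (-(7:ℝ)/3))) := by
      intro r₁ hr₁
      rw [mem_Ioi] at hr₁
      have stepA : ∀ r₂ ∈ Ioi (0:ℝ),
          ENNReal.ofReal (f r₁ r₂)
            = ∫⁻ r in Ioi (0:ℝ),
                ENNReal.ofReal ((r₁ ^ ((4:ℝ)/3) * Real.exp (-((1+r)*r₁))) *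
                  (r₂ ^ ((4:ℝ)/3) * Real.exp (-((l+r)*r₂)))) := by
        intro r₂ hr₂
        rw [mem_Ioi] at hr₂
        have hs : (0:ℝ) < r₁ + r₂ := by linarith
        have h1 : ENNReal.ofReal (f r₁ r₂)
            = ENNReal.ofReal (r₁ ^ ((4:ℝ)/3) * r₂ ^ ((4:ℝ)/3) * Real.exp (-(r₁ + l*r₂)))
              * ENNReal.ofReal (1/(r₁+r₂)) := by
          rw [← ENNReal.ofReal_mul (by positivity), hf]
          ring_nf
        rw [h1, ← hexp_lint hs, ← lintegral_const_mul' _ _ ENNReal.ofReal_ne_top]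
        refine setLIntegral_congr_fun measurableSet_Ioi
          (fun r _ => ?_)
        rw [← ENNReal.ofReal_mul (by positivity)]
        congr 1
        have hE : Real.exp (-(r₁ + l*r₂)) * Real.exp (-((r₁+r₂)*r))
            = Real.exp (-((1+r)*r₁)) * Real.exp (-((l+r)*r₂)) := by
          rw [← Real.exp_add, ← Real.exp_add]
          ring_nf
        linear_combination (r₁ ^ ((4:ℝ)/3) * r₂ ^ ((4:ℝ)/3)) * hE
      rw [setLIntegral_congr_fun measurableSet_Ioi
        stepA]
      rw [lintegral_lintegral_swap (by
        apply Measurable.aemeasurable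
        apply Measurable.ennreal_ofReal
        fun_prop)]
      refine setLIntegral_congr_fun measurableSet_Ioi
        (fun r hr => ?_)
      rw [mem_Ioi] at hr
      calc ∫⁻ r₂ in Ioi (0:ℝ),
            ENNReal.ofReal ((r₁ ^ ((4:ℝ)/3) * Real.exp (-((1+r)*r₁))) *
              (r₂ ^ ((4:ℝ)/3) * Real.exp (-((l+r)*r₂))))
          = ∫⁻ r₂ in Ioi (0:ℝ),
              ENNReal.ofReal (r₁ ^ ((4:ℝ)/3) * Real.exp (-((1+r)*r₁))) *
                ENNReal.ofReal (r₂ ^ ((4:ℝ)/3) * Real.exp (-((l+r)*r₂))) := by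
            refine lintegral_congr fun r₂ => ?_
            rw [← ENNReal.ofReal_mul (by positivity)]
        _ = ENNReal.ofReal (r₁ ^ ((4:ℝ)/3) * Real.exp (-((1+r)*r₁))) *
              ∫⁻ r₂ in Ioi (0:ℝ), ENNReal.ofReal (r₂ ^ ((4:ℝ)/3) * Real.exp (-((l+r)*r₂))) :=
            lintegral_const_mul' _ _ ENNReal.ofReal_ne_top
        _ = _ := by
            rw [hgam_lint (by linarith : (0:ℝ) < l + r),
              ← ENNReal.ofReal_mul (by positivity)]
    -- finiteness of the inner lintegral
    have fin : ∀ r₁ ∈ Ioi (0:ℝ), (∫⁻ r₂ in Ioi (0:ℝ), ENNReal.ofReal (f r₁ r₂)) ≠ ⊤ := by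
      intro r₁ hr₁
      rw [mem_Ioi] at hr₁
      have hb : ∀ r₂ ∈ Ioi (0:ℝ),
          f r₁ r₂ ≤ r₁ ^ ((1:ℝ)/3) * (r₂ ^ ((4:ℝ)/3) * Real.exp (-(l*r₂))) := by
        intro r₂ hr₂
        rw [mem_Ioi] at hr₂
        have h1 : f r₁ r₂ ≤ (r₁ ^ ((4:ℝ)/3) * r₂ ^ ((4:ℝ)/3) * Real.exp (-(l*r₂))) / r₁ := by
          rw [hf]
          apply div_le_div₀ (by positivity) ?_ hr₁ (by linarith)
          have : Real.exp (-(r₁ + l*r₂)) ≤ Real.exp (-(l*r₂)) :=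
            Real.exp_le_exp.mpr (by linarith)
          have h2 : (0:ℝ) ≤ r₁ ^ ((4:ℝ)/3) * r₂ ^ ((4:ℝ)/3) := by positivity
          calc r₁ ^ ((4:ℝ)/3) * r₂ ^ ((4:ℝ)/3) * Real.exp (-(r₁ + l*r₂))
              ≤ r₁ ^ ((4:ℝ)/3) * r₂ ^ ((4:ℝ)/3) * Real.exp (-(l*r₂)) :=
                mul_le_mul_of_nonneg_left this h2
            _ = _ := rfl
        refine h1.trans_eq ?_
        have h43 : r₁ ^ ((4:ℝ)/3) = r₁ ^ ((1:ℝ)/3) * r₁ := by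
          rw [show (4:ℝ)/3 = 1/3 + 1 by norm_num, Real.rpow_add hr₁, Real.rpow_one]
        rw [h43]
        field_simp
      have hint : IntegrableOn
          (fun r₂ : ℝ => r₁ ^ ((1:ℝ)/3) * (r₂ ^ ((4:ℝ)/3) * Real.exp (-(l*r₂)))) (Ioi 0) :=
        (hgam_intg hl).const_mul _
      have hle : (∫⁻ r₂ in Ioi (0:ℝ), ENNReal.ofReal (f r₁ r₂))
          ≤ ∫⁻ r₂ in Ioi (0:ℝ),
              ENNReal.ofReal (r₁ ^ ((1:ℝ)/3) * (r₂ ^ ((4:ℝ)/3) * Real.exp (-(l*r₂)))) := by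
        refine lintegral_mono_ae ?_
        filter_upwards [ae_restrict_mem measurableSet_Ioi] with r₂ hr₂
        exact ENNReal.ofReal_le_ofReal (hb r₂ hr₂)
      refine (hle.trans_lt ?_).ne
      rw [← ofReal_integral_eq_lintegral_ofReal hint ?_]
      · exact ENNReal.ofReal_lt_top
      · filter_upwards [ae_restrict_mem measurableSet_Ioi] with r₂ hr₂
        have hr₂' : (0:ℝ) < r₂ := hr₂
        positivity
    -- convert inner Bochner integral
    have inner_eq : ∀ r₁ ∈ Ioi (0:ℝ),
        (∫ r₂ in Ioi (0:ℝ), f r₁ r₂) = (∫⁻ r₂ in Ioi (0:ℝ), ENNReal.ofReal (f r₁ r₂)).toReal := by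
      intro r₁ hr₁
      rw [mem_Ioi] at hr₁
      refine integral_eq_lintegral_of_nonneg_ae ?_ ?_
      · filter_upwards [ae_restrict_mem measurableSet_Ioi] with r₂ hr₂
        have hr₂' : (0:ℝ) < r₂ := hr₂
        rw [hf]
        positivity
      · apply Measurable.aestronglyMeasurable
        fun_prop
    -- the inner-lintegral function as a function of r₁ is measurable
    have mI : Measurable fun r₁ : ℝ => ∫⁻ r₂ in Ioi (0:ℝ), ENNReal.ofReal (f r₁ r₂) :=
      Measurable.lintegral_prod_right' (f := fun p : ℝ × ℝ => ENNReal.ofReal (f p.1 p.2)) mf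
    -- outer conversion
    have outer_eq :
        (∫ r₁ in Ioi (0:ℝ), ∫ r₂ in Ioi (0:ℝ), f r₁ r₂)
          = (∫⁻ r₁ in Ioi (0:ℝ), ∫⁻ r₂ in Ioi (0:ℝ), ENNReal.ofReal (f r₁ r₂)).toReal := by
      rw [integral_eq_lintegral_of_nonneg_ae ?_ ?_]
      · congr 1
        refine lintegral_congr_ae ?_
        filter_upwards [ae_restrict_mem measurableSet_Ioi] with r₁ hr₁
        rw [inner_eq r₁ hr₁, ENNReal.ofReal_toReal (fin r₁ hr₁)]
      · filter_upwards [ae_restrict_mem measurableSet_Ioi] with r₁ hr₁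
        rw [inner_eq r₁ hr₁]
        exact ENNReal.toReal_nonneg
      · refine (mI.ennreal_toReal.aestronglyMeasurable).congr ?_
        filter_upwards [ae_restrict_mem measurableSet_Ioi] with r₁ hr₁
        exact (inner_eq r₁ hr₁).symm
    -- compute the double lintegral
    have main :
        (∫⁻ r₁ in Ioi (0:ℝ), ∫⁻ r₂ in Ioi (0:ℝ), ENNReal.ofReal (f r₁ r₂))
          = ENNReal.ofReal (G^2) *
              ∫⁻ r in Ioi (0:ℝ), ENNReal.ofReal ((1+r) ^ (-(7:ℝ)/3) * (l+r) ^ (-(7:ℝ)/3)) := by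
      rw [setLIntegral_congr_fun measurableSet_Ioi key]
      rw [lintegral_lintegral_swap (by
        apply Measurable.aemeasurable
        apply Measurable.ennreal_ofReal
        fun_prop)]
      rw [← lintegral_const_mul' _ _ ENNReal.ofReal_ne_top]
      refine setLIntegral_congr_fun measurableSet_Ioi
        (fun r hr => ?_)
      rw [mem_Ioi] at hr
      calc ∫⁻ r₁ in Ioi (0:ℝ),
            ENNReal.ofReal ((r₁ ^ ((4:ℝ)/3) * Real.exp (-((1+r)*r₁))) *
              (G * (l+r) ^ (-(7:ℝ)/3)))
          = ∫⁻ r₁ in Ioi (0:ℝ),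
              ENNReal.ofReal (r₁ ^ ((4:ℝ)/3) * Real.exp (-((1+r)*r₁))) *
                ENNReal.ofReal (G * (l+r) ^ (-(7:ℝ)/3)) := by
            refine setLIntegral_congr_fun measurableSet_Ioi
              (fun r₁ hr₁ => ?_)
            have hr₁' : (0:ℝ) < r₁ := hr₁
            rw [← ENNReal.ofReal_mul (by positivity)]
        _ = (∫⁻ r₁ in Ioi (0:ℝ), ENNReal.ofReal (r₁ ^ ((4:ℝ)/3) * Real.exp (-((1+r)*r₁)))) *
              ENNReal.ofReal (G * (l+r) ^ (-(7:ℝ)/3)) :=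
            lintegral_mul_const' _ _ ENNReal.ofReal_ne_top
        _ = ENNReal.ofReal (G * (1+r) ^ (-(7:ℝ)/3)) *
              ENNReal.ofReal (G * (l+r) ^ (-(7:ℝ)/3)) := by
            rw [hgam_lint (by linarith : (0:ℝ) < 1 + r)]
        _ = ENNReal.ofReal (G^2) *
              ENNReal.ofReal ((1+r) ^ (-(7:ℝ)/3) * (l+r) ^ (-(7:ℝ)/3)) := by
            rw [← ENNReal.ofReal_mul (by positivity), ← ENNReal.ofReal_mul (by positivity)]
            congr 1
            ring
    -- RHS conversion
    have rhs_eq : (∫ r in Ioi (0:ℝ), (1+r) ^ (-(7:ℝ)/3) * (l+r) ^ (-(7:ℝ)/3))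
        = (∫⁻ r in Ioi (0:ℝ),
            ENNReal.ofReal ((1+r) ^ (-(7:ℝ)/3) * (l+r) ^ (-(7:ℝ)/3))).toReal := by
      refine integral_eq_lintegral_of_nonneg_ae ?_ ?_
      · filter_upwards [ae_restrict_mem measurableSet_Ioi] with r hr
        have hr' : (0:ℝ) < r := hr
        have h1 : (0:ℝ) < 1 + r := by linarith
        have h2 : (0:ℝ) < l + r := by linarith
        exact mul_nonneg (Real.rpow_nonneg h1.le _) (Real.rpow_nonneg h2.le _)
      · apply Measurable.aestronglyMeasurable
        fun_prop
    rw [outer_eq, main, rhs_eq, ENNReal.toReal_mul, ENNReal.toReal_ofReal (by positivity)]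
end

section
/- Let ω = e^{iπ/3}. For all r₁, r₂ > 0, the sum over signs σ₁, σ₂ ∈ {−1, +1} of σ₁σ₂ / (r₁^{1/3} e^{σ₁ iπ/3} + r₂^{1/3} e^{σ₂ iπ/3}) equals −3 r₁^{1/3} r₂^{1/3} / (r₁ + r₂). -/
open Complex

theorem stmt10 (r₁ r₂ : ℝ) (h1 : 0 < r₁) (h2 : 0 < r₂) :
    1 / (((r₁ ^ ((1:ℝ)/3) : ℝ) : ℂ) * Complex.exp (Real.pi/3 * Complex.I)
          + ((r₂ ^ ((1:ℝ)/3) : ℝ) : ℂ) * Complex.exp (Real.pi/3 * Complex.I))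
      - 1 / (((r₁ ^ ((1:ℝ)/3) : ℝ) : ℂ) * Complex.exp (Real.pi/3 * Complex.I)
          + ((r₂ ^ ((1:ℝ)/3) : ℝ) : ℂ) * Complex.exp (-(Real.pi/3) * Complex.I))
      - 1 / (((r₁ ^ ((1:ℝ)/3) : ℝ) : ℂ) * Complex.exp (-(Real.pi/3) * Complex.I)
          + ((r₂ ^ ((1:ℝ)/3) : ℝ) : ℂ) * Complex.exp (Real.pi/3 * Complex.I))
      + 1 / (((r₁ ^ ((1:ℝ)/3) : ℝ) : ℂ) * Complex.exp (-(Real.pi/3) * Complex.I)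
          + ((r₂ ^ ((1:ℝ)/3) : ℝ) : ℂ) * Complex.exp (-(Real.pi/3) * Complex.I))
      = -3 * ((r₁ ^ ((1:ℝ)/3) : ℝ) : ℂ) * ((r₂ ^ ((1:ℝ)/3) : ℝ) : ℂ) / ((r₁ : ℂ) + (r₂ : ℂ)) := by
  set a : ℝ := r₁ ^ ((1:ℝ)/3) with hadef
  set b : ℝ := r₂ ^ ((1:ℝ)/3) with hbdef
  have hapos : 0 < a := Real.rpow_pos_of_pos h1 _
  have hbpos : 0 < b := Real.rpow_pos_of_pos h2 _
  have ha3 : a ^ 3 = r₁ := by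
    rw [hadef, ← Real.rpow_natCast (r₁ ^ ((1:ℝ)/3)) 3, ← Real.rpow_mul h1.le]; norm_num
  have hb3 : b ^ 3 = r₂ := by
    rw [hbdef, ← Real.rpow_natCast (r₂ ^ ((1:ℝ)/3)) 3, ← Real.rpow_mul h2.le]; norm_num
  have ht : ((Real.sqrt 3 : ℝ) : ℂ)^2 = 3 := by
    rw [← Complex.ofReal_pow, Real.sq_sqrt (by norm_num : (3:ℝ) ≥ 0)]; norm_num
  have hw : Complex.exp (Real.pi/3 * Complex.I) = (1/2 : ℂ) + (Real.sqrt 3 : ℂ)/2 * Complex.I := by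
    rw [Complex.exp_mul_I]
    have h : (Real.pi : ℂ)/3 = ((Real.pi/3 : ℝ) : ℂ) := by push_cast; ring
    rw [h, ← Complex.ofReal_cos, ← Complex.ofReal_sin, Real.cos_pi_div_three, Real.sin_pi_div_three]
    push_cast; ring
  have hwm : Complex.exp (-(Real.pi/3) * Complex.I) = 1 - Complex.exp (Real.pi/3 * Complex.I) := by
    rw [Complex.exp_mul_I, hw]
    have h : -((Real.pi : ℂ)/3) = ((-(Real.pi/3) : ℝ) : ℂ) := by push_cast; ring
    rw [h, ← Complex.ofReal_cos, ← Complex.ofReal_sin, Real.cos_neg, Real.sin_neg,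
      Real.cos_pi_div_three, Real.sin_pi_div_three]
    push_cast; ring
  have hw2 : Complex.exp (Real.pi/3 * Complex.I)^2 = Complex.exp (Real.pi/3 * Complex.I) - 1 := by
    rw [hw]
    linear_combination (Complex.I^2/4) * ht + (3/4 : ℂ) * Complex.I_sq
  have hA : ((r₁ : ℝ) : ℂ) = (a : ℂ)^3 := by rw [← ha3]; push_cast; ring
  have hB : ((r₂ : ℝ) : ℂ) = (b : ℂ)^3 := by rw [← hb3]; push_cast; ring
  rw [hwm, hA, hB]
  set w : ℂ := Complex.exp (Real.pi/3 * Complex.I) with hwdef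
  have hw0 : w ≠ 0 := Complex.exp_ne_zero _
  have h1w : (1 : ℂ) - w ≠ 0 := by
    rw [hw]; intro h
    have h2 := congrArg Complex.re h
    simp [Complex.sub_re, Complex.mul_re] at h2
    norm_num at h2
  have key : ∀ x y : ℝ, 0 < x → 0 < y → (x : ℂ) * w + (y : ℂ) * (1 - w) ≠ 0 := by
    intro x y hx hy h
    rw [hw] at h
    have h2 := congrArg Complex.re h
    simp [Complex.add_re, Complex.mul_re, Complex.sub_re, Complex.mul_im] at h2
    linarith
  have habne : ((a + b : ℝ) : ℂ) ≠ 0 := by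
    exact_mod_cast ne_of_gt (by linarith : (0:ℝ) < a + b)
  have hd1 : (a : ℂ) * w + (b : ℂ) * w ≠ 0 := by
    have e : (a : ℂ) * w + (b : ℂ) * w = ((a + b : ℝ) : ℂ) * w := by push_cast; ring
    rw [e]; exact mul_ne_zero habne hw0
  have hd2 : (a : ℂ) * w + (b : ℂ) * (1 - w) ≠ 0 := key a b hapos hbpos
  have hd3 : (a : ℂ) * (1 - w) + (b : ℂ) * w ≠ 0 := by
    have := key b a hbpos hapos; intro h; exact this (by linear_combination h)
  have hd4 : (a : ℂ) * (1 - w) + (b : ℂ) * (1 - w) ≠ 0 := by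
    have e : (a : ℂ) * (1 - w) + (b : ℂ) * (1 - w) = ((a + b : ℝ) : ℂ) * (1 - w) := by
      push_cast; ring
    rw [e]; exact mul_ne_zero habne h1w
  have hden : (a : ℂ)^3 + (b : ℂ)^3 ≠ 0 := by
    have : (a : ℂ)^3 + (b : ℂ)^3 = ((a^3 + b^3 : ℝ) : ℂ) := by push_cast; ring
    rw [this]
    exact_mod_cast ne_of_gt (by positivity : (0:ℝ) < a^3 + b^3)
  have hab : (a:ℂ) + b ≠ 0 := by push_cast at habne; exact habne
  have hq : (a:ℂ)^2 - a*b + b^2 ≠ 0 := by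
    intro h; apply hden; linear_combination ((a:ℂ) + b) * h
  have e1 : 1 / ((a : ℂ) * w + (b : ℂ) * w) = (1 - w) / ((a:ℂ) + b) := by
    rw [div_eq_div_iff hd1 hab]; linear_combination ((a:ℂ) + b) * hw2
  have e4 : 1 / ((a : ℂ) * (1 - w) + (b : ℂ) * (1 - w)) = w / ((a:ℂ) + b) := by
    rw [div_eq_div_iff hd4 hab]; linear_combination ((a:ℂ) + b) * hw2
  have e2 : 1 / ((a : ℂ) * w + (b : ℂ) * (1 - w)) = ((a : ℂ) * (1 - w) + (b : ℂ) * w) / ((a:ℂ)^2 - a*b + b^2) := by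
    rw [div_eq_div_iff hd2 hq]; linear_combination ((a:ℂ) - b)^2 * hw2
  have e3 : 1 / ((a : ℂ) * (1 - w) + (b : ℂ) * w) = ((a : ℂ) * w + (b : ℂ) * (1 - w)) / ((a:ℂ)^2 - a*b + b^2) := by
    rw [div_eq_div_iff hd3 hq]; linear_combination ((a:ℂ) - b)^2 * hw2
  rw [e1, e2, e3, e4]
  have hf : (a:ℂ)^3 + b^3 = ((a:ℂ) + b) * ((a:ℂ)^2 - a*b + b^2) := by ring
  rw [hf, eq_div_iff (mul_ne_zero hab hq)]
  have i1 := mul_inv_cancel₀ hab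
  have i2 := mul_inv_cancel₀ hq
  linear_combination ((a:ℂ)^2 - a*b + b^2) * i1 - ((a:ℂ) + b)^2 * i2
end
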